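/- Let x ∈ W be of positive level and let α be a positive double affine root with x^{−1}(α) < 0. Then the map β ↦ −s_α(β) sends the length difference set L_{x,α} to itself, is an involution of L_{x,α}, and its only fixed point in L_{x,α} is α. Consequently, the elements of L_{x,α} other than α come in pairs {β, −s_α(β)} with β ≠ −s_α(β). -/

import Mathlib

/-!
Common framework for the double affine Weyl semigroup of Welch,
"Double Affine Bruhat Order".

Encoding conventions:
* `P` is the finite weight lattice `P_fin` (an additive abelian group) equipped with
  an integer-valued pairing `pair` (the normalized simply-laced pairing, identifying
  roots and coroots).
* A finite root is an element of the set `Φfin ⊆ P`; `finPos` is the set of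
  positive finite roots.
* An affine root `ν + rδ` is encoded as the pair `(ν, r) : P × ℤ`.
* An affine weight `ζ = μ + mδ + lΛ₀ ∈ X` is encoded as `(μ, m, l) : P × ℤ × ℤ`.
* A double affine root `ν + rδ + jπ` is encoded as `(ν, r, j) : P × ℤ × ℤ`.
* `G` is the affine Weyl group `W_aff` (an abstract group), acting on affine
  roots via `ract` and on `X` via `xact`; `saff α̃` is the reflection `s_{α̃}`,
  `Ytr λ` is the translation `Y^λ`.
* An element `X^ζ w̃` of the group `X ⋊ W_aff` (in particular of the double affine
  Weyl semigroup `W`, whose elements are those with `ζ` in the Tits cone) is encoded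
  as the pair `(ζ, w̃) : (P × ℤ × ℤ) × G`.
-/

namespace DoubleAffineBruhat

/-- Positivity of an affine root `ν + rδ`, encoded as the pair `(ν, r)`:
`ν + rδ > 0` iff `r > 0`, or `r = 0` and `ν` is a positive finite root. -/
def aPos {P : Type} (finPos : Set P) (a : P × ℤ) : Prop :=
  0 < a.2 ∨ (a.2 = 0 ∧ a.1 ∈ finPos)

/-- The pairing of an affine weight `ζ = μ + mδ + lΛ₀`, encoded as `(μ, m, l)`,
with an affine root `ν + rδ`, encoded as `(ν, r)`:
`⟨ζ, ν + rδ⟩ = ⟨μ, ν⟩ + l·r`. -/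
def xpair {P : Type} (pair : P → P → ℤ) (ζ : P × ℤ × ℤ) (a : P × ℤ) : ℤ :=
  pair ζ.1 a.1 + ζ.2.2 * a.2

/-- The level of an affine weight. -/
def level {P : Type} (ζ : P × ℤ × ℤ) : ℤ := ζ.2.2

/-- The Tits cone `𝒯 = {mδ : m ∈ ℤ} ∪ {μ + mδ + lΛ₀ : l > 0}`. -/
def Tits (P : Type) [AddCommGroup P] : Set (P × ℤ × ℤ) :=
  {ζ | (ζ.1 = 0 ∧ ζ.2.2 = 0) ∨ 0 < ζ.2.2}

/-- Positivity of a double affine root `α = α̃ + jπ` encoded as `(ν, r, j)`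
(with `α̃ = ν + rδ`): positive iff (`α̃ > 0` and `j ≥ 0`) or (`α̃ < 0` and `j > 0`). -/
def dPos {P : Type} [AddCommGroup P] (finPos : Set P) (a : P × ℤ × ℤ) : Prop :=
  (aPos finPos (a.1, a.2.1) ∧ 0 ≤ a.2.2) ∨ (aPos finPos (-a.1, -a.2.1) ∧ 0 < a.2.2)

variable {P G : Type} [AddCommGroup P] [Group G]

/-- Multiplication in the group `X ⋊ W_aff`:
`(X^ζ g)(X^η h) = X^{ζ + gη} (gh)`, where `xact` is the action of `W_aff` on `X`. -/
def dwmul (xact : G → P × ℤ × ℤ → P × ℤ × ℤ) (x y : (P × ℤ × ℤ) × G) :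
    (P × ℤ × ℤ) × G :=
  (x.1 + xact x.2 y.1, x.2 * y.2)

/-- Inversion in the group `X ⋊ W_aff`: `(X^ζ g)⁻¹ = X^{-g⁻¹ζ} g⁻¹`. -/
def dwinv (xact : G → P × ℤ × ℤ → P × ℤ × ℤ) (x : (P × ℤ × ℤ) × G) :
    (P × ℤ × ℤ) × G :=
  (-(xact x.2⁻¹ x.1), x.2⁻¹)

/-- Action of `X^ζ g ∈ X ⋊ W_aff` on double affine roots:
`X^ζ g (α̃ + jπ) = g(α̃) + (j - ⟨ζ, g(α̃)⟩)π`, where `ract` is the action of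
`W_aff` on affine roots. -/
def dact (pair : P → P → ℤ) (ract : G → P × ℤ → P × ℤ)
    (x : (P × ℤ × ℤ) × G) (a : P × ℤ × ℤ) : P × ℤ × ℤ :=
  ((ract x.2 (a.1, a.2.1)).1, (ract x.2 (a.1, a.2.1)).2,
    a.2.2 - xpair pair x.1 (ract x.2 (a.1, a.2.1)))

/-- The reflection `s_α = X^{-j(ν + rδ)} s_{ν + rδ} ∈ X ⋊ W_aff` associated to the
double affine root `α = ν + rδ + jπ`. -/
def dref (saff : P × ℤ → G) (a : P × ℤ × ℤ) : (P × ℤ × ℤ) × G :=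
  ((-a.2.2 • a.1, -(a.2.2 * a.2.1), 0), saff (a.1, a.2.1))

/-- All the data of the double affine setting together with the structural facts
that hold in it (context facts; `Φ_fin` irreducible and simply laced, normalized
pairing, Coxeter facts for `W_aff`, etc.). -/
structure Ctx (P G : Type) [AddCommGroup P] [Group G] where
  /-- the normalized pairing on the finite weight lattice -/
  pair : P → P → ℤ
  /-- the set of finite roots `Φ_fin` -/
  Φfin : Set P
  /-- the set of positive finite roots -/
  finPos : Set P
  /-- the number of finite simple roots (the affine simple roots are `α_0, …, α_n`) -/
  n : ℕ
  /-- the affine simple roots `α_0, …, α_n` -/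
  simple : Fin (n + 1) → P × ℤ
  /-- the action of `W_aff` on affine roots -/
  ract : G → P × ℤ → P × ℤ
  /-- the action of `W_aff` on the affine weight lattice `X` -/
  xact : G → P × ℤ × ℤ → P × ℤ × ℤ
  /-- the reflection `s_{α̃} ∈ W_aff` of an affine root `α̃` -/
  saff : P × ℤ → G
  /-- the translation `Y^λ ∈ W_aff` -/
  Ytr : P → G
  /-- the linear functional `⟨·, 2ρ⟩`, `ρ` the sum of the affine fundamental weights;
  an affine root `ν + rδ` is paired as the weight `(ν, r, 0)` -/
  rho2 : P × ℤ × ℤ → ℤ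
  /-- `ζ ↦ ζ₊`, the dominant representative of the `W_aff`-orbit of `ζ` (for `ζ ∈ 𝒯`) -/
  domRep : P × ℤ × ℤ → P × ℤ × ℤ
  pair_add_left : ∀ μ ν γ, pair (μ + ν) γ = pair μ γ + pair ν γ
  pair_add_right : ∀ μ ν γ, pair μ (ν + γ) = pair μ ν + pair μ γ
  pair_symm : ∀ μ ν, pair μ ν = pair ν μ
  pair_norm : ∀ ν ∈ Φfin, pair ν ν = 2
  pair_bound : ∀ ν ∈ Φfin, ∀ γ ∈ Φfin, pair ν γ ≤ 2
  pair_two_eq : ∀ ν ∈ Φfin, ∀ γ ∈ Φfin, pair ν γ = 2 → ν = γ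
  root_neg : ∀ ν ∈ Φfin, -ν ∈ Φfin
  pos_trichotomy : ∀ ν ∈ Φfin, (ν ∈ finPos ↔ ¬(-ν ∈ finPos))
  simple_root : ∀ i, (simple i).1 ∈ Φfin
  simple_pos : ∀ i, aPos finPos (simple i)
  ract_one : ∀ a, ract 1 a = a
  ract_mul : ∀ g h a, ract (g * h) a = ract g (ract h a)
  ract_neg : ∀ g a, ract g (-a) = -(ract g a)
  ract_root : ∀ g (a : P × ℤ), a.1 ∈ Φfin → (ract g a).1 ∈ Φfin
  xact_one : ∀ ζ, xact 1 ζ = ζ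
  xact_mul : ∀ g h ζ, xact (g * h) ζ = xact g (xact h ζ)
  xact_add : ∀ g ζ η, xact g (ζ + η) = xact g ζ + xact g η
  xact_level : ∀ g ζ, (xact g ζ).2.2 = ζ.2.2
  xact_pair : ∀ g ζ a, xpair pair (xact g ζ) (ract g a) = xpair pair ζ a
  saff_act : ∀ (ν : P) (r : ℤ) (γ : P) (p : ℤ),
    ract (saff (ν, r)) (γ, p) = (γ - pair ν γ • ν, p - r * pair ν γ)
  saff_invol : ∀ a : P × ℤ, saff a * saff a = 1
  saff_neg : ∀ a : P × ℤ, saff (-a) = saff a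
  Ytr_act : ∀ (lam ν : P) (r : ℤ), ract (Ytr lam) (ν, r) = (ν, r - pair lam ν)
  decomp : ∀ g : G, ∃ (lam : P) (wf : G), g = Ytr lam * wf ∧
    ∀ (ν : P) (r : ℤ), ract wf (ν, r) = ((ract wf (ν, 0)).1, r)
  invFin : ∀ g : G,
    {a : P × ℤ | a.1 ∈ Φfin ∧ aPos finPos a ∧ aPos finPos (-(ract g a))}.Finite
  domRep_mem : ∀ ζ : P × ℤ × ℤ, ζ ∈ Tits P → ∃ g : G, xact g ζ = domRep ζ
  domRep_dom : ∀ ζ : P × ℤ × ℤ, ζ ∈ Tits P → ∀ i, 0 ≤ xpair pair (domRep ζ) (simple i)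
  domRep_eq : ∀ ζ : P × ℤ × ℤ, ζ ∈ Tits P →
    ∀ g : G, (∀ i, 0 ≤ xpair pair (xact g ζ) (simple i)) → xact g ζ = domRep ζ
  rho2_add : ∀ ζ η, rho2 (ζ + η) = rho2 ζ + rho2 η
  rho2_simple : ∀ i, rho2 ((simple i).1, (simple i).2, 0) = 2

/-- The inversion set `Inv(g) = {α̃ ∈ Φ_aff : α̃ > 0, g(α̃) < 0}`. -/
def InvA (C : Ctx P G) (g : G) : Set (P × ℤ) :=
  {a | a.1 ∈ C.Φfin ∧ aPos C.finPos a ∧ aPos C.finPos (-(C.ract g a))}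

/-- The Coxeter length of `g ∈ W_aff`, via `ℓ(g) = |Inv(g)|`. -/
noncomputable def alen (C : Ctx P G) (g : G) : ℤ := ((InvA C g).ncard : ℤ)

/-- `ζ ∈ X` is dominant: `⟨ζ, α_i⟩ ≥ 0` for all affine simple roots. -/
def dominant (C : Ctx P G) (ζ : P × ℤ × ℤ) : Prop :=
  ∀ i, 0 ≤ xpair C.pair ζ (C.simple i)

/-- `ζ ∈ X` is regular: `⟨ζ, α̃⟩ ≠ 0` for all affine roots `α̃`. -/
def regular (C : Ctx P G) (ζ : P × ℤ × ℤ) : Prop :=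
  ∀ a : P × ℤ, a.1 ∈ C.Φfin → xpair C.pair ζ a ≠ 0

/-- The length of `x = X^ζ w̃ ∈ W`:
`ℓ(x) = ⟨ζ₊, 2ρ⟩ + #{α̃ ∈ Inv(w̃⁻¹) : ⟨ζ, α̃⟩ ≤ 0} - #{α̃ ∈ Inv(w̃⁻¹) : ⟨ζ, α̃⟩ > 0}`. -/
noncomputable def dlen (C : Ctx P G) (x : (P × ℤ × ℤ) × G) : ℤ :=
  C.rho2 (C.domRep x.1)
    + ((InvA C x.2⁻¹ ∩ {a | xpair C.pair x.1 a ≤ 0}).ncard : ℤ)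
    - ((InvA C x.2⁻¹ ∩ {a | 0 < xpair C.pair x.1 a}).ncard : ℤ)

/-- One generating step of the double affine Bruhat order:
`bstep C x y` holds iff `x` has positive level and `y = s_α x` for some positive
double affine root `α` with `x⁻¹(α) < 0`. -/
def bstep (C : Ctx P G) (x y : (P × ℤ × ℤ) × G) : Prop :=
  0 < level x.1 ∧ ∃ a : P × ℤ × ℤ, a.1 ∈ C.Φfin ∧ dPos C.finPos a ∧
    dPos C.finPos (-(dact C.pair C.ract (dwinv C.xact x) a)) ∧
    y = dwmul C.xact (dref C.saff a) x

/-- `bge C x y` means `x ≥ y` in the double affine Bruhat order (the order generated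
by the relations `s_α x < x`). -/
def bge (C : Ctx P G) (x y : (P × ℤ × ℤ) × G) : Prop :=
  Relation.ReflTransGen (bstep C) x y

/-- `blt C y x` means `y < x` in the double affine Bruhat order. -/
def blt (C : Ctx P G) (y x : (P × ℤ × ℤ) × G) : Prop :=
  bge C x y ∧ y ≠ x

/-- `y` is a cocover of `x`: `y < x` and there is no `z` with `y < z < x`. -/
def cocover (C : Ctx P G) (y x : (P × ℤ × ℤ) × G) : Prop :=
  blt C y x ∧ ¬∃ z : (P × ℤ × ℤ) × G, blt C y z ∧ blt C z x

/-- A double affine root `b` "corresponds to a point of the lower graph of `x`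
(corresponding to `fin b`)": `b > 0` and `x⁻¹(b) < 0`. -/
def inGraph (C : Ctx P G) (x : (P × ℤ × ℤ) × G) (b : P × ℤ × ℤ) : Prop :=
  dPos C.finPos b ∧ dPos C.finPos (-(dact C.pair C.ract (dwinv C.xact x) b))

/-- The lower graph `Γ_{x,ν} = {(r,j) : ν + rδ + jπ > 0 and x⁻¹(ν + rδ + jπ) < 0}`. -/
def Gamma (C : Ctx P G) (x : (P × ℤ × ℤ) × G) (ν : P) : Set (ℤ × ℤ) :=
  {rj | inGraph C x (ν, rj.1, rj.2)}

/-- `a` is a corner of the lower graph `Γ_{x, fin(a)}`. -/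
def IsCorner (C : Ctx P G) (x : (P × ℤ × ℤ) × G) (a : P × ℤ × ℤ) : Prop :=
  inGraph C x a ∧
    ∀ b : P × ℤ × ℤ, b.1 = a.1 → b ≠ a → inGraph C x b →
      ¬ inGraph C x (-(dact C.pair C.ract (dref C.saff a) b))

/-- The length difference set
`L_{x,α} = {β ∈ Φ : β > 0, x⁻¹(β) < 0, s_α(β) < 0, x⁻¹ s_α(β) > 0}`. -/
def Ldiff (C : Ctx P G) (x : (P × ℤ × ℤ) × G) (a : P × ℤ × ℤ) :
    Set (P × ℤ × ℤ) :=
  {b | b.1 ∈ C.Φfin ∧ dPos C.finPos b ∧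
    dPos C.finPos (-(dact C.pair C.ract (dwinv C.xact x) b)) ∧
    dPos C.finPos (-(dact C.pair C.ract (dref C.saff a) b)) ∧
    dPos C.finPos (dact C.pair C.ract (dwinv C.xact x) (dact C.pair C.ract (dref C.saff a) b))}

section Aux

variable {P G : Type} [AddCommGroup P] [Group G]

/-- The pairing with `μ` on the left, as an additive hom in the right argument. -/
private def prHom (C : Ctx P G) (μ : P) : P →+ ℤ :=
  AddMonoidHom.mk' (C.pair μ) (C.pair_add_right μ)

lemma pr_neg (C : Ctx P G) (μ ν : P) : C.pair μ (-ν) = -C.pair μ ν :=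
  map_neg (prHom C μ) ν

lemma pr_sub (C : Ctx P G) (μ ν γ : P) :
    C.pair μ (ν - γ) = C.pair μ ν - C.pair μ γ :=
  map_sub (prHom C μ) ν γ

lemma pr_smul (C : Ctx P G) (μ : P) (n : ℤ) (ν : P) :
    C.pair μ (n • ν) = n * C.pair μ ν := by
  have h : C.pair μ (n • ν) = n • C.pair μ ν := map_zsmul (prHom C μ) n ν
  simpa only [smul_eq_mul] using h

lemma pr_smul_left (C : Ctx P G) (n : ℤ) (ν μ : P) :
    C.pair (n • ν) μ = n * C.pair ν μ := by
  rw [C.pair_symm, pr_smul, C.pair_symm]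

/-- `dact` commutes with negation of the root. -/
lemma dact_neg (C : Ctx P G) (z : (P × ℤ × ℤ) × G) (b : P × ℤ × ℤ) :
    dact C.pair C.ract z (-b) = -(dact C.pair C.ract z b) := by
  obtain ⟨b1, b2, b3⟩ := b
  have hr : C.ract z.2 (-b1, -b2) = -(C.ract z.2 (b1, b2)) := by
    have := C.ract_neg z.2 (b1, b2)
    simpa using this
  simp only [dact, xpair, Prod.fst_neg, Prod.snd_neg, hr, pr_neg, Prod.neg_mk,
    Prod.mk.injEq]
  exact ⟨trivial, trivial, by ring⟩

/-- `s_α` is an involution on double affine roots. -/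
lemma dref_invol (C : Ctx P G) (a b : P × ℤ × ℤ) (ha : a.1 ∈ C.Φfin) :
    dact C.pair C.ract (dref C.saff a)
      (dact C.pair C.ract (dref C.saff a) b) = b := by
  obtain ⟨ν, r, j⟩ := a
  obtain ⟨γ, p, q⟩ := b
  have hν : C.pair ν ν = 2 := C.pair_norm ν ha
  simp only [dact, dref, xpair, C.saff_act, pr_sub, pr_smul, pr_smul_left, hν,
    Prod.mk.injEq]
  refine ⟨?_, by ring, by ring⟩
  have h2 : (C.pair ν γ - C.pair ν γ * 2) = -(C.pair ν γ) := by ring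
  rw [h2, neg_smul, sub_neg_eq_add, sub_add_cancel]

/-- `s_α(α) = -α`. -/
lemma dact_dref_self (C : Ctx P G) (a : P × ℤ × ℤ) (ha : a.1 ∈ C.Φfin) :
    dact C.pair C.ract (dref C.saff a) a = -a := by
  obtain ⟨ν, r, j⟩ := a
  have hν : C.pair ν ν = 2 := C.pair_norm ν ha
  simp only [dact, dref, xpair, C.saff_act, pr_sub, pr_smul, pr_smul_left, hν,
    Prod.neg_mk, Prod.mk.injEq]
  refine ⟨?_, by ring, by ring⟩
  rw [show (2 : ℤ) • ν = ν + ν from two_zsmul ν]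
  abel

/-- A double affine root and its negative cannot both be positive. -/
lemma dPos_neg_not (C : Ctx P G) (a : P × ℤ × ℤ) (ha : a.1 ∈ C.Φfin)
    (h1 : dPos C.finPos a) (h2 : dPos C.finPos (-a)) : False := by
  obtain ⟨ν, r, j⟩ := a
  have htri := C.pos_trichotomy ν ha
  simp only [dPos, aPos, Prod.neg_mk, neg_neg] at h1 h2
  rcases h1 with ⟨hp, hj⟩ | ⟨hp, hj⟩ <;> rcases h2 with ⟨hq, hk⟩ | ⟨hq, hk⟩ <;>
    rcases hp with hp | ⟨hp1, hp2⟩ <;> rcases hq with hq | ⟨hq1, hq2⟩ <;>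
      first
        | omega
        | (exact (htri.mp hp2) hq2)

/-- If `s_α(β) = -β` then `β = ±α`. -/
lemma fixed_aux (C : Ctx P G) (a b : P × ℤ × ℤ) (ha : a.1 ∈ C.Φfin)
    (hb : b.1 ∈ C.Φfin)
    (h : dact C.pair C.ract (dref C.saff a) b = -b) : b = a ∨ b = -a := by
  obtain ⟨ν, r, j⟩ := a
  obtain ⟨γ, p, q⟩ := b
  have hν : C.pair ν ν = 2 := C.pair_norm ν ha
  have hγ : C.pair γ γ = 2 := C.pair_norm γ hb
  simp only [dact, dref, xpair, C.saff_act, pr_sub, pr_smul, pr_smul_left, hν,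
    Prod.neg_mk, Prod.mk.injEq] at h
  obtain ⟨h1, h2, h3⟩ := h
  set c : ℤ := C.pair ν γ with hc
  -- pair both sides of h1 with γ
  have hcc : c * c = 4 := by
    have := congrArg (C.pair γ) h1
    rw [pr_sub, pr_smul, pr_neg, hγ, C.pair_symm γ ν, ← hc] at this
    linarith
  have hc2 : c = 2 ∨ c = -2 := by
    have : (c - 2) * (c + 2) = 0 := by linear_combination hcc
    rcases mul_eq_zero.mp this with h | h
    · left; linarith
    · right; linarith
  -- simplify h3
  have h3' : 2 * q = j * c := by linear_combination h3
  rcases hc2 with hc2 | hc2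
  · -- c = 2 : ν = γ, b = a
    have hνγ : ν = γ := C.pair_two_eq ν ha γ hb (by rw [← hc, hc2])
    left
    refine Prod.ext ?_ (Prod.ext ?_ ?_)
    · exact hνγ.symm
    · show p = r; rw [hc2] at h2; omega
    · show q = j; rw [hc2] at h3'; omega
  · -- c = -2 : ν = -γ, b = -a
    have hνγ : ν = -γ := by
      refine C.pair_two_eq ν ha (-γ) (C.root_neg γ hb) ?_
      rw [pr_neg, ← hc, hc2]; ring
    right
    refine Prod.ext ?_ (Prod.ext ?_ ?_)
    · show γ = -ν; rw [hνγ, neg_neg]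
    · show p = -r; rw [hc2] at h2; omega
    · show q = -j; rw [hc2] at h3'; omega

end Aux

/-- `β ↦ -s_α(β)` is an involution of the length difference set
`L_{x,α}` whose only fixed point is `α`; elements other than `α` come in pairs. -/
theorem statement9 {P G : Type} [AddCommGroup P] [Group G] (C : Ctx P G)
    (x : (P × ℤ × ℤ) × G) (hxW : x.1 ∈ Tits P) (hxl : 0 < level x.1)
    (a : P × ℤ × ℤ) (ha : a.1 ∈ C.Φfin) (hapos : dPos C.finPos a)
    (haneg : dPos C.finPos (-(dact C.pair C.ract (dwinv C.xact x) a))) :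
    (∀ b ∈ Ldiff C x a, -(dact C.pair C.ract (dref C.saff a) b) ∈ Ldiff C x a) ∧
    (∀ b ∈ Ldiff C x a,
      -(dact C.pair C.ract (dref C.saff a) (-(dact C.pair C.ract (dref C.saff a) b))) = b) ∧
    (∀ b ∈ Ldiff C x a, (-(dact C.pair C.ract (dref C.saff a) b) = b ↔ b = a)) ∧
    (∀ b ∈ Ldiff C x a, b ≠ a →
      -(dact C.pair C.ract (dref C.saff a) b) ∈ Ldiff C x a ∧
      -(dact C.pair C.ract (dref C.saff a) b) ≠ b) := by
  have hmem : ∀ b ∈ Ldiff C x a,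
      -(dact C.pair C.ract (dref C.saff a) b) ∈ Ldiff C x a := by
    intro b hb
    rw [Ldiff, Set.mem_setOf_eq] at hb ⊢
    obtain ⟨h1, h2, h3, h4, h5⟩ := hb
    refine ⟨?_, h4, ?_, ?_, ?_⟩
    · exact C.root_neg _ (C.ract_root _ (b.1, b.2.1) h1)
    · rw [dact_neg, neg_neg]; exact h5
    · rw [dact_neg, neg_neg, dref_invol C a b ha]; exact h2
    · rw [dact_neg, dref_invol C a b ha, dact_neg]; exact h3
  have hinv : ∀ b ∈ Ldiff C x a,
      -(dact C.pair C.ract (dref C.saff a)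
        (-(dact C.pair C.ract (dref C.saff a) b))) = b := by
    intro b _
    rw [dact_neg, neg_neg, dref_invol C a b ha]
  have hfix : ∀ b ∈ Ldiff C x a,
      (-(dact C.pair C.ract (dref C.saff a) b) = b ↔ b = a) := by
    intro b hb
    rw [Ldiff, Set.mem_setOf_eq] at hb
    obtain ⟨h1, h2, h3, h4, h5⟩ := hb
    constructor
    · intro h
      have h' : dact C.pair C.ract (dref C.saff a) b = -b :=
        neg_eq_iff_eq_neg.mp h
      rcases fixed_aux C a b ha h1 h' with hba | hba
      · exact hba
      · exfalso
        exact dPos_neg_not C a ha hapos (hba ▸ h2)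
    · intro h
      subst h
      rw [dact_dref_self C b ha, neg_neg]
  refine ⟨hmem, hinv, hfix, ?_⟩
  intro b hb hba
  refine ⟨hmem b hb, ?_⟩
  intro h
  exact hba ((hfix b hb).mp h)

end DoubleAffineBruhat
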